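/- Let k be a field, R = k[[u]], M = R², and t ∈ End_R(M) the endomorphism with matrix (0 1; u³ 0) in the standard basis. Let T be the R-subalgebra of End_R(M) generated by t. Then T ≅ R[X]/(X²−u³) and M is a free T-module of rank one, generated by the second standard basis vector e₂. -/

import Mathlib

open PowerSeries

set_option synthInstance.maxHeartbeats 1000000
set_option maxHeartbeats 1000000

/-- The endomorphism of `M = R²`, `R = k⟦u⟧`, with matrix `(0 1; u³ 0)` in the standard
basis: `e₁ ↦ u³·e₂`, `e₂ ↦ e₁`, i.e. `(x, y) ↦ (y, u³·x)`. -/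
noncomputable def tGood (k : Type*) [Field k] :
    Module.End (PowerSeries k) (PowerSeries k × PowerSeries k) :=
  LinearMap.prod
    (LinearMap.snd (PowerSeries k) (PowerSeries k) (PowerSeries k))
    (((PowerSeries.X : PowerSeries k) ^ 3) • LinearMap.fst (PowerSeries k) (PowerSeries k) (PowerSeries k))

/-- The `R`-subalgebra of `End_R(M)` generated by `t`. -/
noncomputable def TGood (k : Type*) [Field k] :
    Subalgebra (PowerSeries k) (Module.End (PowerSeries k) (PowerSeries k × PowerSeries k)) :=
  Algebra.adjoin (PowerSeries k) {tGood k}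

section Aux
open Polynomial
variable (k : Type*) [Field k]
abbrev Rk := PowerSeries k
abbrev Mk := PowerSeries k × PowerSeries k

lemma tGood_apply (m : Mk k) : tGood k m = (m.2, (PowerSeries.X:Rk k)^3 * m.1) := by
  simp [tGood]

lemma apply_eval (a b : Rk k) :
    (a • (1 : Module.End (Rk k) (Mk k)) + b • tGood k) (0, 1) = (b, a) := by
  simp [tGood_apply, Prod.smul_def]

lemma tGood_sq : tGood k * tGood k = ((PowerSeries.X:Rk k)^3) • 1 := by
  ext m <;> simp [Module.End.mul_apply, tGood_apply]

noncomputable abbrev fGood : Polynomial (Rk k) :=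
  (Polynomial.X : Polynomial (Rk k)) ^ 2 - Polynomial.C ((PowerSeries.X : Rk k) ^ 3)

lemma aeval_root : Polynomial.aeval (tGood k) (fGood k) = 0 := by
  rw [fGood, map_sub, map_pow, Polynomial.aeval_X, Polynomial.aeval_C, sq, tGood_sq,
    Algebra.algebraMap_eq_smul_one, sub_self]

lemma fGood_monic : (fGood k).Monic := by
  simpa using Polynomial.monic_X_pow_sub_C ((PowerSeries.X : Rk k) ^ 3) (two_ne_zero)

lemma aeval_form (p : Polynomial (Rk k)) :
    Polynomial.aeval (tGood k) p =
      ((p %ₘ fGood k).coeff 0) • (1 : Module.End (Rk k) (Mk k))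
        + ((p %ₘ fGood k).coeff 1) • tGood k := by
  conv_lhs => rw [← Polynomial.modByMonic_add_div p (fGood k)]
  rw [map_add, map_mul, aeval_root, zero_mul, add_zero]
  have hdeg : (p %ₘ fGood k).degree ≤ 1 := by
    have := Polynomial.degree_modByMonic_lt p (fGood_monic k)
    have h2 : (fGood k).degree = 2 := by
      rw [fGood]
      compute_degree!
    rw [h2] at this
    exact Order.le_of_lt_succ (by exact_mod_cast this)
  set r := p %ₘ fGood k with hr
  calc Polynomial.aeval (tGood k) r
      = Polynomial.aeval (tGood k) (Polynomial.C (r.coeff 1) * Polynomial.X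
          + Polynomial.C (r.coeff 0)) := by
        rw [← Polynomial.eq_X_add_C_of_degree_le_one hdeg]
    _ = r.coeff 0 • 1 + r.coeff 1 • tGood k := by
        rw [map_add, map_mul, Polynomial.aeval_X, Polynomial.aeval_C, Polynomial.aeval_C,
          Algebra.algebraMap_eq_smul_one, Algebra.algebraMap_eq_smul_one, smul_mul_assoc, one_mul]
        abel

/-- the lift `AdjoinRoot f →ₐ End` -/
noncomputable def phiGood : AdjoinRoot (fGood k) →ₐ[Rk k] Module.End (Rk k) (Mk k) :=
  Ideal.Quotient.liftₐ _ (Polynomial.aeval (tGood k)) (by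
    intro a ha
    rw [Ideal.mem_span_singleton] at ha
    obtain ⟨c, rfl⟩ := ha
    rw [map_mul, aeval_root, zero_mul])

lemma phiGood_mk (p : Polynomial (Rk k)) :
    phiGood k (AdjoinRoot.mk (fGood k) p) = Polynomial.aeval (tGood k) p := rfl

lemma phiGood_inj : Function.Injective (phiGood k) := by
  rw [injective_iff_map_eq_zero]
  intro z hz
  obtain ⟨p, rfl⟩ := AdjoinRoot.mk_surjective z
  rw [phiGood_mk, aeval_form] at hz
  have h := congrArg (fun s : Module.End (Rk k) (Mk k) => s ((0:Rk k), (1:Rk k))) hz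
  simp only [apply_eval, LinearMap.zero_apply] at h
  have hc0 : (p %ₘ fGood k).coeff 0 = 0 := congrArg Prod.snd h
  have hc1 : (p %ₘ fGood k).coeff 1 = 0 := congrArg Prod.fst h
  have hdeg : (p %ₘ fGood k).degree ≤ 1 := by
    have := Polynomial.degree_modByMonic_lt p (fGood_monic k)
    have h2 : (fGood k).degree = 2 := by rw [fGood]; compute_degree!
    rw [h2] at this
    exact Order.le_of_lt_succ (by exact_mod_cast this)
  have hr : p %ₘ fGood k = 0 := by
    rw [Polynomial.eq_X_add_C_of_degree_le_one hdeg, hc0, hc1]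
    simp
  have : AdjoinRoot.mk (fGood k) p = AdjoinRoot.mk (fGood k) (p %ₘ fGood k) := by
    conv_lhs => rw [← Polynomial.modByMonic_add_div p (fGood k)]
    rw [map_add, map_mul, AdjoinRoot.mk_self, zero_mul, add_zero]
  rw [this, hr, map_zero]

lemma phiGood_range : (phiGood k).range = TGood k := by
  rw [TGood, Algebra.adjoin_singleton_eq_range_aeval]
  apply le_antisymm
  · rintro _ ⟨z, rfl⟩
    obtain ⟨p, rfl⟩ := AdjoinRoot.mk_surjective z
    exact ⟨p, (phiGood_mk k p).symm⟩
  · rintro _ ⟨p, rfl⟩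
    exact ⟨AdjoinRoot.mk (fGood k) p, phiGood_mk k p⟩

lemma exists_rep (s : Module.End (Rk k) (Mk k)) (hs : s ∈ TGood k) :
    ∃ p : Polynomial (Rk k), Polynomial.aeval (tGood k) p = s := by
  rw [TGood, Algebra.adjoin_singleton_eq_range_aeval (Rk k) (tGood k)] at hs
  exact hs

end Aux

/-- Let `k` be a field, `R = k⟦u⟧`, `M = R²`, and `t ∈ End_R(M)` the endomorphism with matrix
`(0 1; u³ 0)` in the standard basis; let `T` be the `R`-subalgebra of `End_R(M)` generated by
`t`. Then `T ≅ R[X]/(X² − u³)` and `M` is a free `T`-module of rank one, generated by the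
second standard basis vector `e₂ = (0,1)`: the map `T → M`, `s ↦ s·e₂`, is bijective (it is an
isomorphism of `T`-modules). -/
theorem stmt_3 (k : Type*) [Field k] :
    Nonempty
      ((AdjoinRoot ((Polynomial.X : Polynomial (PowerSeries k)) ^ 2
          - Polynomial.C ((PowerSeries.X : PowerSeries k) ^ 3))) ≃ₐ[PowerSeries k] TGood k) ∧
    Function.Bijective
      (fun s : TGood k => s • (((0 : PowerSeries k), (1 : PowerSeries k)))) := by
  constructor
  · exact ⟨(AlgEquiv.ofInjective (phiGood k) (phiGood_inj k)).trans
      (Subalgebra.equivOfEq _ _ (phiGood_range k))⟩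
  constructor
  · intro s1 s2 h
    obtain ⟨p1, hp1⟩ := exists_rep k _ s1.2
    obtain ⟨p2, hp2⟩ := exists_rep k _ s2.2
    apply Subtype.ext
    have he : (s1 : Module.End (Rk k) (Mk k)) ((0:Rk k),(1:Rk k))
        = (s2 : Module.End (Rk k) (Mk k)) ((0:Rk k),(1:Rk k)) := h
    rw [← hp1, ← hp2, aeval_form, aeval_form, apply_eval, apply_eval, Prod.mk.injEq] at he
    rw [← hp1, ← hp2, aeval_form, aeval_form, he.1, he.2]
  · intro m
    refine ⟨⟨m.2 • 1 + m.1 • tGood k, ?_⟩, ?_⟩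
    · exact add_mem (SMulMemClass.smul_mem _ (one_mem _))
        (SMulMemClass.smul_mem _ (Algebra.self_mem_adjoin_singleton _ _))
    · show (m.2 • 1 + m.1 • tGood k) ((0:Rk k),(1:Rk k)) = m
      rw [apply_eval]
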